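/- The set A = ⋃_{n=0}^∞ [e^{2n}, e^{2n+1}) satisfies: A ∈ 𝓐^uni with α(A) = 1/2, but A ∉ 𝓒, i.e. ρ_A(x) does not converge as x → ∞. Hence 𝓒 is a proper subset of 𝓐^uni: the measure α assigns a uniquely determined probability to some sets without natural density. -/

import Mathlib

open MeasureTheory Filter Set Topology

noncomputable section

namespace UPN

/-- The half line `[0,∞)` viewed as a subset of `ℝ`. -/
def Ray : Set ℝ := Set.Ici 0

/-- The indicator function `1_A`. -/
def ind (A : Set ℝ) : ℝ → ℝ := Set.indicator A fun _ => (1 : ℝ)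

/-- The collection `𝓜` of countable unions `⋃ᵢ [a_{2i-1}, a_{2i})` for a
nondecreasing nonnegative sequence `a`. -/
def Mcal : Set (Set ℝ) :=
  {A | ∃ a : ℕ → ℝ, 0 ≤ a 0 ∧ Monotone a ∧
        A = ⋃ i : ℕ, Set.Ico (a (2 * i)) (a (2 * i + 1))}

/-- The density function `ρ_A`: `ρ_A(0) = 0` and `ρ_A(x) = (1/x)∫₀ˣ 1_A(y) dy`. -/
def rho (A : Set ℝ) (x : ℝ) : ℝ :=
  if x = 0 then 0 else (1 / x) * ∫ y in (0:ℝ)..x, ind A y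

/-- The collection `𝓒` of elements of `𝓜` having natural density. -/
def Ccal : Set (Set ℝ) :=
  {A | A ∈ Mcal ∧ ∃ l : ℝ, Tendsto (rho A) atTop (𝓝 l)}

/-- The natural density `λ(A) = lim_{x→∞} ρ_A(x)`. -/
def lam (A : Set ℝ) : ℝ := limUnder atTop (rho A)

/-- `S_A(x) = m(A ∩ [0,x))`. -/
def Sfn (A : Set ℝ) (x : ℝ) : ℝ := (volume (A ∩ Set.Ico 0 x)).toReal

/-- The thinning operation `A ∘ B = {x : x ∈ A ∧ S_A(x) ∈ B}`. -/
def thin (A B : Set ℝ) : Set ℝ := {x | x ∈ A ∧ Sfn A x ∈ B}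

/-- An f-system on `[0,∞)`: a nonempty collection of subsets of `[0,∞)` closed
under complements (in `[0,∞)`) and finite disjoint unions. -/
structure IsFSystem (F : Set (Set ℝ)) : Prop where
  nonempty : F.Nonempty
  subset_ray : ∀ A ∈ F, A ⊆ Ray
  compl_mem : ∀ A ∈ F, Ray \ A ∈ F
  union_mem : ∀ A ∈ F, ∀ B ∈ F, A ∩ B = ∅ → A ∪ B ∈ F

/-- A probability pair `(F, μ)` on `[0,∞)`: `F` is an f-system and `μ` is a finitely
additive probability measure on `F` with values in `[0,1]` and `μ([0,∞)) = 1`. -/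
structure IsProbPair (F : Set (Set ℝ)) (μ : Set ℝ → ℝ) : Prop where
  fsystem : IsFSystem F
  nonneg : ∀ A ∈ F, 0 ≤ μ A
  le_one : ∀ A ∈ F, μ A ≤ 1
  ray_eq_one : μ Ray = 1
  additive : ∀ A ∈ F, ∀ B ∈ F, A ∩ B = ∅ → μ (A ∪ B) = μ A + μ B

/-- A weakly thinnable pair (WTP). -/
structure IsWTP (F : Set (Set ℝ)) (μ : Set ℝ → ℝ) : Prop where
  pair : IsProbPair F μ
  Ccal_subset : Ccal ⊆ F
  subset_Mcal : F ⊆ Mcal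
  P1 : ∀ C ∈ Ccal, ∀ A ∈ F, thin C A ∈ F ∧ μ (thin C A) = μ C * μ A
  P2 : ∀ A ∈ F, ∀ B ∈ F, (∀ x : ℝ, Sfn B x ≤ Sfn A x) → μ B ≤ μ A
  P3 : ∀ c : ℝ, 0 ≤ c → μ (Set.Ici c) = 1

/-- Coherence of a probability measure `μ` on an f-system `F` on `[0,∞)`. -/
def Coherent (F : Set (Set ℝ)) (μ : Set ℝ → ℝ) : Prop :=
  ∀ (n : ℕ) (a : Fin n → ℝ) (A : Fin n → Set ℝ), (∀ i, A i ∈ F) →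
    0 ≤ ⨆ x : Ray, ∑ i, a i * (ind (A i) ↑x - μ (A i))

/-- `σ_A(D,x) = (1/D) ∫_x^{x+D} 1_A(y) dy`. -/
def sigmaFn (A : Set ℝ) (D x : ℝ) : ℝ := (1 / D) * ∫ y in x..(x + D), ind A y

/-- `U(A) = limsup_{D→∞} sup_{x>0} σ_A(D,x)`. -/
def Ufn (A : Set ℝ) : ℝ :=
  limsup (fun D => ⨆ x : Set.Ioi (0:ℝ), sigmaFn A D ↑x) atTop

/-- `L(A) = liminf_{D→∞} inf_{x>0} σ_A(D,x)`. -/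
def Lfn (A : Set ℝ) : ℝ :=
  liminf (fun D => ⨅ x : Set.Ioi (0:ℝ), sigmaFn A D ↑x) atTop

/-- `𝓦^uni = {A ∈ 𝓜 : L(A) = U(A)}`. -/
def Wuni : Set (Set ℝ) := {A | A ∈ Mcal ∧ Lfn A = Ufn A}

/-- `log(A) = {log a : a ∈ A ∩ [1,∞)}`. -/
def logSet (A : Set ℝ) : Set ℝ := Real.log '' (A ∩ Set.Ici 1)

/-- `𝓐^uni = {A ∈ 𝓜 : log(A) ∈ 𝓦^uni}`. -/
def Auni : Set (Set ℝ) := {A | A ∈ Mcal ∧ logSet A ∈ Wuni}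

/-- `α(A) = λ(log(A))`. -/
def alphaFn (A : Set ℝ) : ℝ := lam (logSet A)

/-- `ξ_A(D,x) = (1/log D) ∫_x^{Dx} ρ_A(y)/y dy`. -/
def xi (A : Set ℝ) (D x : ℝ) : ℝ :=
  (1 / Real.log D) * ∫ y in x..(D * x), rho A y / y

/-- Membership in `𝓟`: `s` is a sequence in `(1,∞)` tending to `∞` and `f` is a
sequence in `(1,∞)`. -/
def memP (s f : ℕ → ℝ) : Prop :=
  (∀ n, 1 < s n) ∧ Tendsto s atTop atTop ∧ ∀ n, 1 < f n

/-- `𝓐^{s,f} = {A ∈ 𝓜 : lim_n ξ_A(s_n,f_n) exists}`. -/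
def Asf (s f : ℕ → ℝ) : Set (Set ℝ) :=
  {A | A ∈ Mcal ∧ ∃ l : ℝ, Tendsto (fun n => xi A (s n) (f n)) atTop (𝓝 l)}

/-- `α^{s,f}(A) = lim_n ξ_A(s_n,f_n)`. -/
def alphasf (s f : ℕ → ℝ) (A : Set ℝ) : ℝ :=
  limUnder atTop fun n => xi A (s n) (f n)

/-- `τ_A(C,j)`; here `j : ℕ` starting from `0` corresponds to the interval
`[C^j, C^{j+1})`, i.e. to the paper's `τ_A(C, j+1)`. -/
def tau (A : Set ℝ) (C : ℝ) (j : ℕ) : ℝ :=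
  (1 / (C ^ j * (C - 1))) * ∫ y in (C ^ j : ℝ)..(C ^ (j + 1)), ind A y

/-- `U^*(C,A) = limsup_{n→∞} sup_k (1/n) Σ_{j=k}^{k+n-1} τ_A(C,j)`. -/
def Ustar (C : ℝ) (A : Set ℝ) : ℝ :=
  limsup (fun n : ℕ => ⨆ k : ℕ, (1 / (n : ℝ)) * ∑ i ∈ Finset.range n, tau A C (k + i)) atTop

-- ===================== auxiliary development =====================


lemma Mcal_measurable {E : Set ℝ} (h : E ∈ Mcal) : MeasurableSet E := by
  obtain ⟨a, -, -, rfl⟩ := h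
  exact MeasurableSet.iUnion fun i => measurableSet_Ico

lemma vol_Ico_ne_top (E : Set ℝ) (a b : ℝ) : volume (E ∩ Set.Ico a b) ≠ ⊤ :=
  ne_top_of_le_ne_top (by simp [Real.volume_Ico]) (measure_mono inter_subset_right)

lemma vol_Ioc_ne_top (E : Set ℝ) (a b : ℝ) : volume (E ∩ Set.Ioc a b) ≠ ⊤ :=
  ne_top_of_le_ne_top (by simp [Real.volume_Ioc]) (measure_mono inter_subset_right)

lemma vol_Ioc_eq_Ico (E : Set ℝ) (a b : ℝ) :
    volume (E ∩ Set.Ioc a b) = volume (E ∩ Set.Ico a b) := by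
  refine measure_congr ?_
  exact Filter.EventuallyEq.inter (by rfl) ((Ioo_ae_eq_Ioc (μ := volume) (a := a) (b := b)).symm.trans Ioo_ae_eq_Ico)

lemma Sfn_nonneg (E : Set ℝ) (x : ℝ) : 0 ≤ Sfn E x := ENNReal.toReal_nonneg

lemma Sfn_mono (E : Set ℝ) : Monotone (Sfn E) := fun x y hxy =>
  ENNReal.toReal_mono (vol_Ico_ne_top E 0 y)
    (measure_mono (inter_subset_inter_right _ (Ico_subset_Ico_right hxy)))

lemma Sfn_add (E : Set ℝ) (hE : MeasurableSet E) {a b : ℝ} (h0 : 0 ≤ a) (hab : a ≤ b) :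
    Sfn E b = Sfn E a + (volume (E ∩ Set.Ico a b)).toReal := by
  unfold Sfn
  rw [← ENNReal.toReal_add (vol_Ico_ne_top E 0 a) (vol_Ico_ne_top E a b), ← measure_union ?disj ?meas]
  · rw [← inter_union_distrib_left, Set.Ico_union_Ico_eq_Ico h0 hab]
  case disj => exact (Set.Ico_disjoint_Ico_same).mono inter_subset_right inter_subset_right
  case meas => exact hE.inter measurableSet_Ico

lemma Sfn_diff_le (E : Set ℝ) (hE : MeasurableSet E) {a b : ℝ} (h0 : 0 ≤ a) (hab : a ≤ b) :
    Sfn E b - Sfn E a ≤ b - a := by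
  rw [Sfn_add E hE h0 hab]
  have : (volume (E ∩ Set.Ico a b)).toReal ≤ b - a := by
    have : volume (E ∩ Set.Ico a b) ≤ volume (Set.Ico a b) := measure_mono inter_subset_right
    calc (volume (E ∩ Set.Ico a b)).toReal ≤ (volume (Set.Ico a b)).toReal :=
          ENNReal.toReal_mono (by simp [Real.volume_Ico]) this
      _ = b - a := by simp [Real.volume_Ico, ENNReal.toReal_ofReal (by linarith : (0:ℝ) ≤ b - a)]
  linarith

lemma integral_ind (E : Set ℝ) (hE : MeasurableSet E) {a b : ℝ} (h0 : 0 ≤ a) (hab : a ≤ b) :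
    ∫ y in a..b, ind E y = Sfn E b - Sfn E a := by
  rw [intervalIntegral.integral_of_le hab]
  unfold ind
  rw [setIntegral_indicator hE]
  rw [setIntegral_const]
  rw [Set.inter_comm, measureReal_def, vol_Ioc_eq_Ico]
  rw [Sfn_add E hE h0 hab]
  simp

lemma rho_eq (E : Set ℝ) (hE : MeasurableSet E) {x : ℝ} (hx : 0 < x) :
    rho E x = Sfn E x / x := by
  unfold rho
  rw [if_neg hx.ne']
  rw [integral_ind E hE le_rfl hx.le]
  have : Sfn E 0 = 0 := by simp [Sfn]
  rw [this]
  ring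

lemma sigma_eq (E : Set ℝ) (hE : MeasurableSet E) {D x : ℝ} (hD : 0 < D) (hx : 0 ≤ x) :
    sigmaFn E D x = (Sfn E (x + D) - Sfn E x) / D := by
  unfold sigmaFn
  rw [integral_ind E hE hx (by linarith)]
  ring


section Union
variable {g h : ℕ → ℝ} (hgh : ∀ k, g k ≤ h k) (hhg : ∀ k, h k ≤ g (k + 1)) (hg0 : 0 ≤ g 0)
include hgh hhg

lemma g_mono : Monotone g :=
  monotone_nat_of_le_succ fun k => (hgh k).trans (hhg k)

include hg0 in
lemma g_nonneg (n : ℕ) : 0 ≤ g n := hg0.trans (g_mono hgh hhg (Nat.zero_le n))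

lemma slice (n : ℕ) :
    (⋃ k, Set.Ico (g k) (h k)) ∩ Set.Ico (g n) (g (n + 1)) = Set.Ico (g n) (h n) := by
  ext x
  simp only [Set.mem_inter_iff, Set.mem_iUnion, Set.mem_Ico]
  constructor
  · rintro ⟨⟨k, hk1, hk2⟩, hx1, hx2⟩
    rcases lt_trichotomy k n with hkn | rfl | hkn
    · have : h k ≤ g n := (hhg k).trans (g_mono hgh hhg hkn)
      exact absurd hx1 (by linarith)
    · exact ⟨hx1, hk2⟩
    · have : g (n + 1) ≤ g k := g_mono hgh hhg hkn
      exact absurd hx2 (by linarith)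
  · rintro ⟨hx1, hx2⟩
    exact ⟨⟨n, hx1, hx2⟩, hx1, hx2.trans_le (hhg n)⟩

lemma Ubase : (⋃ k, Set.Ico (g k) (h k)) ∩ Set.Ico 0 (g 0) = ∅ := by
  ext x
  simp only [Set.mem_inter_iff, Set.mem_iUnion, Set.mem_Ico, Set.mem_empty_iff_false, iff_false]
  rintro ⟨⟨k, hk1, -⟩, -, hx2⟩
  exact absurd ((g_mono hgh hhg (Nat.zero_le k)).trans hk1) (not_le.2 hx2)

include hg0 in
lemma Sfn_U_g (hU : MeasurableSet (⋃ k, Set.Ico (g k) (h k))) (n : ℕ) :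
    Sfn (⋃ k, Set.Ico (g k) (h k)) (g n) = ∑ k ∈ Finset.range n, (h k - g k) := by
  induction n with
  | zero => simp [Sfn, Ubase hgh hhg]
  | succ n ih =>
    rw [Sfn_add _ hU (g_nonneg hgh hhg hg0 n) (g_mono hgh hhg (Nat.le_succ n)),
      slice hgh hhg, ih, Finset.sum_range_succ, Real.volume_Ico,
      ENNReal.toReal_ofReal (by linarith [hgh n])]

include hg0 in
lemma Sfn_U_mid (hU : MeasurableSet (⋃ k, Set.Ico (g k) (h k))) (n : ℕ) {x : ℝ}
    (hx1 : g n ≤ x) (hx2 : x ≤ h n) :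
    Sfn (⋃ k, Set.Ico (g k) (h k)) x
      = Sfn (⋃ k, Set.Ico (g k) (h k)) (g n) + (x - g n) := by
  rw [Sfn_add _ hU (g_nonneg hgh hhg hg0 n) hx1]
  congr 1
  have hsub : Set.Ico (g n) x ⊆ ⋃ k, Set.Ico (g k) (h k) := by
    refine subset_trans (Set.Ico_subset_Ico_right hx2) (Set.subset_iUnion_of_subset n subset_rfl)
  rw [Set.inter_eq_self_of_subset_right hsub, Real.volume_Ico,
    ENNReal.toReal_ofReal (by linarith)]

end Union

lemma sup_inf_tendsto {E : Set ℝ} (hE : MeasurableSet E) {l : ℝ}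
    (H : ∀ ε : ℝ, 0 < ε → ∃ M : ℝ, 0 ≤ M ∧ ∀ x y : ℝ, 0 ≤ x → x ≤ y →
        Sfn E y - Sfn E x ≤ (l + ε) * (y - x) + M ∧
        (l - ε) * (y - x) - M ≤ Sfn E y - Sfn E x) :
    Tendsto (fun D => ⨆ x : Set.Ioi (0:ℝ), sigmaFn E D ↑x) atTop (𝓝 l) ∧
    Tendsto (fun D => ⨅ x : Set.Ioi (0:ℝ), sigmaFn E D ↑x) atTop (𝓝 l) := by
  haveI : Nonempty (Set.Ioi (0:ℝ)) := ⟨⟨1, by norm_num⟩⟩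
  have key : ∀ ε : ℝ, 0 < ε → ∃ N : ℝ, 0 < N ∧ ∀ D ≥ N, ∀ x : Set.Ioi (0:ℝ),
      l - ε < sigmaFn E D ↑x ∧ sigmaFn E D ↑x < l + ε := by
    intro ε hε
    obtain ⟨M, hM0, hM⟩ := H (ε/2) (by linarith)
    refine ⟨max 1 (4*(M+1)/ε), lt_of_lt_of_le one_pos (le_max_left _ _), ?_⟩
    intro D hD x
    have hD1 : (1:ℝ) ≤ D := le_trans (le_max_left _ _) hD
    have hDpos : 0 < D := by linarith
    have hx : (0:ℝ) < ↑x := x.2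
    have hMD : M < ε / 2 * D := by
      have h4 : 4*(M+1)/ε ≤ D := le_trans (le_max_right _ _) hD
      have h5 : 4*(M+1) ≤ D * ε := (div_le_iff₀ hε).mp h4
      nlinarith
    have hσ := sigma_eq E hE hDpos hx.le
    obtain ⟨hub, hlb⟩ := hM ↑x (↑x + D) hx.le (by linarith)
    rw [add_sub_cancel_left] at hub hlb
    constructor
    · rw [hσ, lt_div_iff₀ hDpos]
      nlinarith
    · rw [hσ, div_lt_iff₀ hDpos]
      nlinarith
  constructor
  · rw [Metric.tendsto_atTop]
    intro ε hε
    obtain ⟨N, hN0, hN⟩ := key (ε/2) (by linarith)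
    refine ⟨N, fun D hD => ?_⟩
    have h := hN D hD
    have hub : (⨆ x : Set.Ioi (0:ℝ), sigmaFn E D ↑x) ≤ l + ε/2 :=
      ciSup_le fun x => (h x).2.le
    have hlb : l - ε/2 ≤ ⨆ x : Set.Ioi (0:ℝ), sigmaFn E D ↑x := by
      refine le_trans (h ⟨1, by norm_num⟩).1.le ?_
      exact le_ciSup ⟨l + ε/2, forall_mem_range.2 fun x => (h x).2.le⟩ _
    rw [Real.dist_eq, abs_lt]
    constructor <;> linarith
  · rw [Metric.tendsto_atTop]
    intro ε hε
    obtain ⟨N, hN0, hN⟩ := key (ε/2) (by linarith)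
    refine ⟨N, fun D hD => ?_⟩
    have h := hN D hD
    have hlb : l - ε/2 ≤ ⨅ x : Set.Ioi (0:ℝ), sigmaFn E D ↑x :=
      le_ciInf fun x => (h x).1.le
    have hub : (⨅ x : Set.Ioi (0:ℝ), sigmaFn E D ↑x) ≤ l + ε/2 := by
      refine le_trans ?_ (h ⟨1, by norm_num⟩).2.le
      exact ciInf_le ⟨l - ε/2, forall_mem_range.2 fun x => (h x).1.le⟩ _
    rw [Real.dist_eq, abs_lt]
    constructor <;> linarith

/-- The set `B = ⋃ [2n, 2n+1)`. -/
def Bset : Set ℝ := ⋃ k : ℕ, Set.Ico (2 * (k:ℝ)) (2 * (k:ℝ) + 1)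

lemma Bset_measurable : MeasurableSet Bset :=
  MeasurableSet.iUnion fun _ => measurableSet_Ico

lemma Sfn_B_even (n : ℕ) : Sfn Bset (2 * (n:ℝ)) = n := by
  have := Sfn_U_g (g := fun k : ℕ => 2 * (k:ℝ)) (h := fun k : ℕ => 2 * (k:ℝ) + 1)
    (fun k => by show (2*(k:ℝ)) ≤ 2*(k:ℝ)+1; linarith)
    (fun k => by show (2*(k:ℝ))+1 ≤ 2*((k+1:ℕ):ℝ); push_cast; linarith) (by norm_num)
    Bset_measurable n
  simpa [Bset] using this

lemma Sfn_B_bound {t : ℝ} (ht : 0 ≤ t) : |Sfn Bset t - t / 2| ≤ 1 := by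
  set n := Nat.floor (t / 2) with hn
  have h1 : (n:ℝ) ≤ t / 2 := Nat.floor_le (by linarith)
  have h2 : t / 2 < (n:ℝ) + 1 := Nat.lt_floor_add_one _
  have hl : (n:ℝ) ≤ Sfn Bset t := by
    have := Sfn_mono Bset (show 2 * (n:ℝ) ≤ t by linarith)
    rwa [Sfn_B_even n] at this
  have hu : Sfn Bset t ≤ (n:ℝ) + 1 := by
    have := Sfn_mono Bset (show t ≤ 2 * ((n+1:ℕ):ℝ) by push_cast; linarith)
    rw [Sfn_B_even (n+1)] at this
    push_cast at this ⊢; linarith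
  rw [abs_le]; constructor <;> linarith

lemma rho_B_tendsto : Tendsto (rho Bset) atTop (𝓝 (1/2)) := by
  rw [Metric.tendsto_atTop]
  intro ε hε
  refine ⟨max 1 (2/ε), fun x hx => ?_⟩
  have hx1 : (1:ℝ) ≤ x := le_trans (le_max_left _ _) hx
  have hxpos : (0:ℝ) < x := by linarith
  have hx2 : 2/ε ≤ x := le_trans (le_max_right _ _) hx
  have hb := Sfn_B_bound hxpos.le
  rw [rho_eq Bset Bset_measurable hxpos, Real.dist_eq]
  have heq : Sfn Bset x / x - 1/2 = (Sfn Bset x - x/2) / x := by rw [eq_div_iff hxpos.ne', sub_mul, div_mul_cancel₀ _ hxpos.ne']; ring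
  rw [heq, abs_div, abs_of_pos hxpos]
  have h2 : 1 / x < ε := by
    rw [div_lt_iff₀ hxpos]
    have : 2/ε * ε ≤ x * ε := mul_le_mul_of_nonneg_right hx2 hε.le
    rw [div_mul_cancel₀ _ hε.ne'] at this
    linarith
  calc |Sfn Bset x - x/2| / x ≤ 1 / x := by
        gcongr
    _ < ε := h2

lemma Bset_H (ε : ℝ) (hε : 0 < ε) : ∃ M : ℝ, 0 ≤ M ∧ ∀ x y : ℝ, 0 ≤ x → x ≤ y →
    Sfn Bset y - Sfn Bset x ≤ (1/2 + ε) * (y - x) + M ∧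
    (1/2 - ε) * (y - x) - M ≤ Sfn Bset y - Sfn Bset x := by
  refine ⟨2, by norm_num, fun x y hx hxy => ?_⟩
  have h1 := Sfn_B_bound hx
  have h2 := Sfn_B_bound (hx.trans hxy)
  rw [abs_le] at h1 h2
  constructor <;> nlinarith

/-- The set `A = ⋃ [e^{2n}, e^{2n+1})`. -/
def Aset : Set ℝ := ⋃ n : ℕ, Set.Ico (Real.exp (2 * (n:ℝ))) (Real.exp (2 * (n:ℝ) + 1))

lemma Aset_measurable : MeasurableSet Aset :=
  MeasurableSet.iUnion fun _ => measurableSet_Ico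

lemma Aset_hgh (k : ℕ) : Real.exp (2 * (k:ℝ)) ≤ Real.exp (2 * (k:ℝ) + 1) :=
  Real.exp_le_exp.2 (by linarith)
lemma Aset_hhg (k : ℕ) : Real.exp (2 * (k:ℝ) + 1) ≤ Real.exp (2 * ((k+1:ℕ):ℝ)) :=
  Real.exp_le_exp.2 (by push_cast; linarith)

lemma one_lt_e : (1:ℝ) < Real.exp 1 := by have := Real.add_one_le_exp 1; linarith
lemma exp2_gt_one : (1:ℝ) < Real.exp 2 := by have := Real.add_one_le_exp 2; linarith

lemma Aset_mem_Mcal : Aset ∈ Mcal := by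
  refine ⟨fun n => Real.exp n, by positivity, ?_, ?_⟩
  · intro m n h
    simpa using Real.exp_le_exp.2 (Nat.cast_le.2 h)
  · unfold Aset
    refine Set.iUnion_congr fun i => ?_
    congr 1 <;> push_cast <;> ring_nf

lemma Bset_mem_Mcal : Bset ∈ Mcal := by
  refine ⟨fun n => (n:ℝ), by norm_num, ?_, ?_⟩
  · intro m n h
    simpa using (Nat.cast_le (α := ℝ)).2 h
  · unfold Bset
    refine Set.iUnion_congr fun i => ?_
    congr 1 <;> push_cast <;> ring_nf

lemma logSet_Aset : logSet Aset = Bset := by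
  have hsub : Aset ⊆ Set.Ici 1 := by
    rintro x hx
    simp only [Aset, Set.mem_iUnion, Set.mem_Ico] at hx
    obtain ⟨n, h1, -⟩ := hx
    have : (1:ℝ) ≤ Real.exp (2 * (n:ℝ)) := by
      rw [show (1:ℝ) = Real.exp 0 by simp]
      exact Real.exp_le_exp.2 (by positivity)
    exact le_trans this h1
  unfold logSet
  rw [Set.inter_eq_self_of_subset_left hsub]
  unfold Aset Bset
  rw [Set.image_iUnion]
  apply Set.iUnion_congr
  intro k
  ext x
  simp only [Set.mem_image, Set.mem_Ico]
  constructor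
  · rintro ⟨t, ⟨h1, h2⟩, rfl⟩
    have ht : 0 < t := lt_of_lt_of_le (Real.exp_pos _) h1
    constructor
    · calc 2*(k:ℝ) = Real.log (Real.exp (2*(k:ℝ))) := (Real.log_exp _).symm
        _ ≤ Real.log t := (Real.log_le_log_iff (Real.exp_pos _) ht).2 h1
    · calc Real.log t < Real.log (Real.exp (2*(k:ℝ)+1)) := Real.log_lt_log ht h2
        _ = 2*(k:ℝ)+1 := Real.log_exp _
  · rintro ⟨h1, h2⟩
    exact ⟨Real.exp x, ⟨Real.exp_le_exp.2 h1, Real.exp_lt_exp.2 h2⟩, Real.log_exp x⟩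

/-- Values of `Sfn Aset` at `exp (2n)`. -/
lemma Sfn_A_even (n : ℕ) :
    Sfn Aset (Real.exp (2 * (n:ℝ))) =
      (Real.exp 1 - 1) * ((Real.exp 2)^n - 1) / (Real.exp 2 - 1) := by
  have h : Sfn Aset (Real.exp (2 * (n:ℝ)))
      = ∑ k ∈ Finset.range n, (Real.exp (2*(k:ℝ)+1) - Real.exp (2*(k:ℝ))) :=
    Sfn_U_g Aset_hgh Aset_hhg (Real.exp_pos _).le Aset_measurable n
  have hterm : ∀ k : ℕ, Real.exp (2*(k:ℝ)+1) - Real.exp (2*(k:ℝ))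
      = (Real.exp 1 - 1) * (Real.exp 2)^k := by
    intro k
    rw [Real.exp_add, ← Real.exp_nat_mul]
    push_cast
    ring_nf
  have hne : Real.exp 2 ≠ 1 := ne_of_gt exp2_gt_one
  rw [h, Finset.sum_congr rfl fun k _ => hterm k, ← Finset.mul_sum, geom_sum_eq hne n]
  field_simp

lemma rho_A_even (n : ℕ) :
    rho Aset (Real.exp (2 * (n:ℝ))) =
      (Real.exp 1 - 1) / (Real.exp 2 - 1) * (1 - ((Real.exp 2)⁻¹)^n) := by
  rw [rho_eq Aset Aset_measurable (Real.exp_pos _), Sfn_A_even n]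
  have hx : Real.exp (2 * (n:ℝ)) = (Real.exp 2)^n := by
    rw [← Real.exp_nat_mul]; ring_nf
  rw [hx]
  have h2 : (0:ℝ) < Real.exp 2 - 1 := by linarith [exp2_gt_one]
  have h3 : (Real.exp 2)^n ≠ 0 := by positivity
  rw [inv_pow]
  field_simp
  try ring

lemma rho_A_odd (n : ℕ) :
    rho Aset (Real.exp (2 * (n:ℝ) + 1)) =
      (Real.exp 1 - 1) * Real.exp 2 / ((Real.exp 2 - 1) * Real.exp 1)
        - ((Real.exp 1 - 1) / ((Real.exp 2 - 1) * Real.exp 1)) * ((Real.exp 2)⁻¹)^n := by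
  have hmid : Sfn Aset (Real.exp (2*(n:ℝ)+1))
      = Sfn Aset (Real.exp (2*(n:ℝ))) + (Real.exp (2*(n:ℝ)+1) - Real.exp (2*(n:ℝ))) :=
    Sfn_U_mid Aset_hgh Aset_hhg (Real.exp_pos _).le Aset_measurable n
      (Aset_hgh n) (le_refl _)
  rw [rho_eq Aset Aset_measurable (Real.exp_pos _), hmid, Sfn_A_even n]
  have ht : Real.exp (2 * (n:ℝ)) = (Real.exp 2)^n := by
    rw [← Real.exp_nat_mul]; ring_nf
  have ho : Real.exp (2 * (n:ℝ) + 1) = (Real.exp 2)^n * Real.exp 1 := by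
    rw [Real.exp_add, ht]
  rw [ho, ht]
  have h2 : (0:ℝ) < Real.exp 2 - 1 := by linarith [exp2_gt_one]
  have h3 : (Real.exp 2)^n ≠ 0 := by positivity
  have h4 : Real.exp 1 ≠ 0 := (Real.exp_pos 1).ne'
  rw [inv_pow]
  field_simp
  try ring

lemma exp2_inv_lt_one : (Real.exp 2)⁻¹ < 1 := by
  rw [inv_lt_one_iff₀]; right; exact exp2_gt_one

lemma tendsto_exp_two_mul : Tendsto (fun n : ℕ => Real.exp (2 * (n:ℝ))) atTop atTop := by
  apply Real.tendsto_exp_atTop.comp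
  exact (tendsto_natCast_atTop_atTop (R := ℝ)).const_mul_atTop (by norm_num)

lemma tendsto_exp_odd : Tendsto (fun n : ℕ => Real.exp (2 * (n:ℝ) + 1)) atTop atTop := by
  apply Real.tendsto_exp_atTop.comp
  exact tendsto_atTop_add_const_right _ 1
    ((tendsto_natCast_atTop_atTop (R := ℝ)).const_mul_atTop (by norm_num))

lemma rho_A_not_conv : ¬ ∃ l : ℝ, Tendsto (rho Aset) atTop (𝓝 l) := by
  rintro ⟨l, hl⟩
  have hr : Tendsto (fun n : ℕ => ((Real.exp 2)⁻¹)^n) atTop (𝓝 0) :=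
    tendsto_pow_atTop_nhds_zero_of_lt_one (by positivity) exp2_inv_lt_one
  have h2 : (0:ℝ) < Real.exp 2 - 1 := by linarith [exp2_gt_one]
  have he1 : (1:ℝ) < Real.exp 1 := one_lt_e
  have heven : Tendsto (fun n : ℕ => rho Aset (Real.exp (2 * (n:ℝ)))) atTop
      (𝓝 ((Real.exp 1 - 1) / (Real.exp 2 - 1))) := by
    simp_rw [rho_A_even]
    have h0 := (tendsto_const_nhds (x := (1:ℝ)) (f := atTop (α := ℕ))).sub hr
    rw [sub_zero] at h0
    simpa using (tendsto_const_nhds.mul h0)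
  have hodd : Tendsto (fun n : ℕ => rho Aset (Real.exp (2 * (n:ℝ) + 1))) atTop
      (𝓝 ((Real.exp 1 - 1) * Real.exp 2 / ((Real.exp 2 - 1) * Real.exp 1))) := by
    simp_rw [rho_A_odd]
    have h0 := (tendsto_const_nhds
      (x := ((Real.exp 1 - 1) / ((Real.exp 2 - 1) * Real.exp 1))) (f := atTop (α := ℕ))).mul hr
    rw [mul_zero] at h0
    simpa using (tendsto_const_nhds.sub h0)
  have le1 : l = (Real.exp 1 - 1) / (Real.exp 2 - 1) :=
    tendsto_nhds_unique (hl.comp tendsto_exp_two_mul) heven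
  have le2 : l = (Real.exp 1 - 1) * Real.exp 2 / ((Real.exp 2 - 1) * Real.exp 1) :=
    tendsto_nhds_unique (hl.comp tendsto_exp_odd) hodd
  rw [le1, div_eq_div_iff h2.ne' (by positivity)] at le2
  have hEgt : Real.exp 1 < Real.exp 2 := Real.exp_lt_exp.2 (by norm_num)
  have hprod : 0 < (Real.exp 1 - 1) * (Real.exp 2 - 1) * (Real.exp 2 - Real.exp 1) :=
    mul_pos (mul_pos (by linarith) h2) (by linarith)
  nlinarith [le2, hprod]

lemma log_image_Ico {c d : ℝ} (hc : 1 ≤ c) (hcd : c ≤ d) :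
    Real.log '' Set.Ico c d = Set.Ico (Real.log c) (Real.log d) := by
  have hc0 : (0:ℝ) < c := by linarith
  ext y
  simp only [Set.mem_image, Set.mem_Ico]
  constructor
  · rintro ⟨t, ⟨h1, h2⟩, rfl⟩
    have ht : 0 < t := lt_of_lt_of_le hc0 h1
    exact ⟨(Real.log_le_log_iff hc0 ht).2 h1, Real.log_lt_log ht h2⟩
  · rintro ⟨h1, h2⟩
    have hd0 : (0:ℝ) < d := by linarith
    refine ⟨Real.exp y, ⟨?_, ?_⟩, Real.log_exp y⟩
    · calc c = Real.exp (Real.log c) := (Real.exp_log hc0).symm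
        _ ≤ Real.exp y := Real.exp_le_exp.2 h1
    · calc Real.exp y < Real.exp (Real.log d) := Real.exp_lt_exp.2 h2
        _ = d := Real.exp_log hd0

lemma Ico_inter_Ici (c d : ℝ) :
    Set.Ico c d ∩ Set.Ici 1 = Set.Ico (max c 1) (max d 1) := by
  ext x
  simp only [Set.mem_inter_iff, Set.mem_Ico, Set.mem_Ici, max_le_iff, le_max_iff, lt_max_iff]
  constructor
  · rintro ⟨⟨h1, h2⟩, h3⟩
    refine ⟨⟨h1, h3⟩, ?_⟩
    rcases le_or_gt d 1 with h | h
    · exact absurd (h2.trans_le h) (not_lt.2 h3)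
    · rcases lt_or_ge x d with h' | h'
      · exact Or.inl h'
      · exact absurd h2 (not_lt.2 h')
  · rintro ⟨⟨h1, h3⟩, h2⟩
    rcases h2 with h | h
    · exact ⟨⟨h1, h⟩, h3⟩
    · exact absurd h (not_lt.2 h3)

lemma logSet_mem_Mcal {C : Set ℝ} (hC : C ∈ Mcal) : logSet C ∈ Mcal := by
  obtain ⟨a, ha0, hmono, rfl⟩ := hC
  refine ⟨fun n => Real.log (max (a n) 1), by simp [Real.log_nonneg], ?_, ?_⟩
  · intro m n h
    have h1 : (1:ℝ) ≤ max (a m) 1 := le_max_right _ _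
    exact (Real.log_le_log_iff (by linarith) (by linarith [le_trans h1 (max_le_max (hmono h) le_rfl)])).2
      (max_le_max (hmono h) le_rfl)
  · unfold logSet
    rw [Set.iUnion_inter, Set.image_iUnion]
    refine Set.iUnion_congr fun i => ?_
    rw [Ico_inter_Ici, log_image_Ico (le_max_right _ _)
      (max_le_max (hmono (by omega : 2*i ≤ 2*i+1)) le_rfl)]

lemma logSet_inter_Ico {C : Set ℝ} {u v : ℝ} (hu : 0 ≤ u) :
    logSet C ∩ Set.Ico u v = Real.log '' (C ∩ Set.Ico (Real.exp u) (Real.exp v)) := by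
  ext y
  simp only [logSet, Set.mem_inter_iff, Set.mem_image, Set.mem_Ico, Set.mem_Ici]
  constructor
  · rintro ⟨⟨t, ⟨htC, ht1⟩, rfl⟩, h1, h2⟩
    have ht : 0 < t := lt_of_lt_of_le one_pos ht1
    refine ⟨t, ⟨htC, ?_, ?_⟩, rfl⟩
    · calc Real.exp u ≤ Real.exp (Real.log t) := Real.exp_le_exp.2 h1
        _ = t := Real.exp_log ht
    · calc t = Real.exp (Real.log t) := (Real.exp_log ht).symm
        _ < Real.exp v := Real.exp_lt_exp.2 h2
  · rintro ⟨t, ⟨htC, h1, h2⟩, rfl⟩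
    have h1' : (1:ℝ) ≤ t := by
      calc (1:ℝ) = Real.exp 0 := by simp
        _ ≤ Real.exp u := Real.exp_le_exp.2 hu
        _ ≤ t := h1
    have ht : 0 < t := lt_of_lt_of_le one_pos h1'
    refine ⟨⟨t, ⟨htC, h1'⟩, rfl⟩, ?_, ?_⟩
    · calc u = Real.log (Real.exp u) := (Real.log_exp u).symm
        _ ≤ Real.log t := (Real.log_le_log_iff (Real.exp_pos u) ht).2 h1
    · calc Real.log t < Real.log (Real.exp v) := Real.log_lt_log ht h2
        _ = v := Real.log_exp v

lemma log_measure_bounds {C : Set ℝ} (hC : MeasurableSet C) (hL : MeasurableSet (logSet C))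
    {u v : ℝ} (hu : 0 ≤ u) (huv : u ≤ v) :
    Real.exp (-v) * (Sfn C (Real.exp v) - Sfn C (Real.exp u))
      ≤ Sfn (logSet C) v - Sfn (logSet C) u ∧
    Sfn (logSet C) v - Sfn (logSet C) u
      ≤ Real.exp (-u) * (Sfn C (Real.exp v) - Sfn C (Real.exp u)) := by
  set s : Set ℝ := C ∩ Set.Ico (Real.exp u) (Real.exp v) with hs
  have hsmeas : MeasurableSet s := hC.inter measurableSet_Ico
  have hsub : s ⊆ Set.Icc (Real.exp u) (Real.exp v) :=
    fun t ht => ⟨ht.2.1, ht.2.2.le⟩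
  have hpos : ∀ t ∈ s, 0 < t := fun t ht => lt_of_lt_of_le (Real.exp_pos u) ht.2.1
  have hL1 : Sfn (logSet C) v - Sfn (logSet C) u = (volume (logSet C ∩ Set.Ico u v)).toReal := by
    rw [Sfn_add (logSet C) hL hu huv]; ring
  have hC1 : Sfn C (Real.exp v) - Sfn C (Real.exp u) = (volume s).toReal := by
    rw [Sfn_add C hC (Real.exp_pos u).le (Real.exp_le_exp.2 huv)]; ring
  -- change of variables
  have himg := logSet_inter_Ico (C := C) (u := u) (v := v) hu
  have hiv : ∫ x in Real.log '' s, (1:ℝ) = ∫ t in s, |t⁻¹| • (1:ℝ) := by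
    refine integral_image_eq_integral_abs_deriv_smul hsmeas
      (fun t ht => (Real.hasDerivAt_log (hpos t ht).ne').hasDerivWithinAt) ?_ _
    exact Real.log_injOn_pos.mono fun t ht => hpos t ht
  have hint : IntegrableOn (fun t : ℝ => t⁻¹) s := by
    refine IntegrableOn.mono_set ?_ hsub
    refine ContinuousOn.integrableOn_Icc ?_
    exact ContinuousOn.inv₀ continuousOn_id fun t ht =>
      (lt_of_lt_of_le (Real.exp_pos u) ht.1).ne'
  have hvol_eq : (volume (logSet C ∩ Set.Ico u v)).toReal = ∫ t in s, t⁻¹ := by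
    rw [himg, ← hs]
    have h1 : ∫ x in Real.log '' s, (1:ℝ) = (volume (Real.log '' s)).toReal • (1:ℝ) :=
      setIntegral_const 1
    have h2 : ∫ t in s, |t⁻¹| • (1:ℝ) = ∫ t in s, t⁻¹ := by
      refine setIntegral_congr_fun hsmeas fun t ht => ?_
      simp [abs_of_pos (inv_pos.2 (hpos t ht))]
    rw [smul_eq_mul, mul_one] at h1
    rw [← h1, hiv, h2]
  have hconst_int : IntegrableOn (fun _ : ℝ => Real.exp (-u)) s :=
    integrableOn_const (by rw [hs]; exact vol_Ico_ne_top C _ _)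
  have hconst_int' : IntegrableOn (fun _ : ℝ => Real.exp (-v)) s :=
    integrableOn_const (by rw [hs]; exact vol_Ico_ne_top C _ _)
  constructor
  · rw [hL1, hC1, hvol_eq]
    calc Real.exp (-v) * (volume s).toReal = ∫ _ in s, Real.exp (-v) := by
          rw [setIntegral_const, smul_eq_mul, mul_comm, measureReal_def]
      _ ≤ ∫ t in s, t⁻¹ := by
          refine setIntegral_mono_on hconst_int' hint hsmeas fun t ht => ?_
          rw [Real.exp_neg]
          exact inv_anti₀ (hpos t ht) ht.2.2.le
  · rw [hL1, hC1, hvol_eq]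
    calc (∫ t in s, t⁻¹) ≤ ∫ _ in s, Real.exp (-u) := by
          refine setIntegral_mono_on hint hconst_int hsmeas fun t ht => ?_
          rw [Real.exp_neg]
          exact inv_anti₀ (Real.exp_pos u) ht.2.1
      _ = Real.exp (-u) * (volume s).toReal := by
          rw [setIntegral_const, smul_eq_mul, mul_comm, measureReal_def]

lemma Sfn_zero (E : Set ℝ) : Sfn E 0 = 0 := by simp [Sfn]

lemma density_estimate {C : Set ℝ} (hC : MeasurableSet C) {l : ℝ}
    (hl : Tendsto (rho C) atTop (𝓝 l)) {ε : ℝ} (hε : 0 < ε) :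
    ∃ T : ℝ, 1 ≤ T ∧ ∀ t : ℝ, T ≤ t → |Sfn C t - l * t| ≤ ε * t := by
  rw [Metric.tendsto_atTop] at hl
  obtain ⟨N, hN⟩ := hl ε hε
  refine ⟨max N 1, le_max_right _ _, fun t ht => ?_⟩
  have ht1 : (1:ℝ) ≤ t := le_trans (le_max_right _ _) ht
  have htpos : (0:ℝ) < t := by linarith
  have h := hN t (le_trans (le_max_left _ _) ht)
  rw [Real.dist_eq, rho_eq C hC htpos] at h
  have heq : Sfn C t - l * t = t * (Sfn C t / t - l) := by
    field_simp
  rw [heq, abs_mul, abs_of_pos htpos]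
  calc t * |Sfn C t / t - l| ≤ t * ε := by
        exact mul_le_mul_of_nonneg_left h.le htpos.le
    _ = ε * t := mul_comm _ _

lemma l_bounds {C : Set ℝ} (hC : MeasurableSet C) {l : ℝ}
    (hl : Tendsto (rho C) atTop (𝓝 l)) : 0 ≤ l ∧ l ≤ 1 := by
  have hev : ∀ᶠ x : ℝ in atTop, rho C x ∈ Set.Icc (0:ℝ) 1 := by
    filter_upwards [eventually_ge_atTop (1:ℝ)] with x hx
    have hxpos : (0:ℝ) < x := by linarith
    rw [rho_eq C hC hxpos]
    constructor
    · exact div_nonneg (Sfn_nonneg C x) hxpos.le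
    · rw [div_le_one hxpos]
      have := Sfn_diff_le C hC (le_refl (0:ℝ)) hxpos.le
      rw [Sfn_zero] at this
      linarith
  constructor
  · exact ge_of_tendsto hl (hev.mono fun x hx => hx.1)
  · exact le_of_tendsto hl (hev.mono fun x hx => hx.2)

set_option maxHeartbeats 2000000 in
lemma logSet_H_aux {C : Set ℝ} (hC : MeasurableSet C) (hL : MeasurableSet (logSet C)) {l : ℝ}
    (hl : Tendsto (rho C) atTop (𝓝 l)) {ε : ℝ} (hε : 0 < ε) (hε1 : ε ≤ 1) :
    ∃ M : ℝ, 0 ≤ M ∧ ∀ x y : ℝ, 0 ≤ x → x ≤ y →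
      Sfn (logSet C) y - Sfn (logSet C) x ≤ (l + ε) * (y - x) + M ∧
      (l - ε) * (y - x) - M ≤ Sfn (logSet C) y - Sfn (logSet C) x := by
  obtain ⟨hl0, hl1⟩ := l_bounds hC hl
  obtain ⟨e, he_def, he⟩ : ∃ e : ℝ, e = Real.exp 1 ∧ 1 < e :=
    ⟨Real.exp 1, rfl, by have := Real.add_one_le_exp 1; linarith⟩
  have he0 : (0:ℝ) ≤ e := by linarith
  obtain ⟨δ, hδ0, hδ1, h2eδ⟩ : ∃ δ : ℝ, 0 < δ ∧ δ ≤ 1 ∧ 2*e*δ ≤ ε := by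
    refine ⟨min 1 (ε/(2*e)), lt_min one_pos (div_pos hε (by linarith)), min_le_left _ _, ?_⟩
    calc 2*e*(min 1 (ε/(2*e))) ≤ 2*e*(ε/(2*e)) :=
          mul_le_mul_of_nonneg_left (min_le_right _ _) (by linarith)
      _ = ε := by field_simp
  obtain ⟨εd, hεd, h4eεd⟩ : ∃ εd : ℝ, 0 < εd ∧ 4*e*εd = ε*δ := by
    refine ⟨ε*δ/(4*e), by positivity, by field_simp⟩
  obtain ⟨T, hT1, hT⟩ := density_estimate hC hl hεd
  obtain ⟨s₀, hs₀, hexp⟩ : ∃ s₀ : ℝ, 0 ≤ s₀ ∧ ∀ s : ℝ, s₀ ≤ s → T ≤ Real.exp s := by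
    refine ⟨Real.log T, Real.log_nonneg hT1, fun s hs => ?_⟩
    calc T = Real.exp (Real.log T) := (Real.exp_log (by linarith)).symm
      _ ≤ Real.exp s := Real.exp_le_exp.2 hs
  -- single piece estimate
  have piece : ∀ s : ℝ, s₀ ≤ s →
      Sfn (logSet C) (s + δ) - Sfn (logSet C) s ≤ (l + ε) * δ ∧
      (l - ε) * δ ≤ Sfn (logSet C) (s + δ) - Sfn (logSet C) s := by
    intro s hs
    have hs0 : 0 ≤ s := hs₀.trans hs
    have hb := log_measure_bounds hC hL hs0 (by linarith : s ≤ s + δ)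
    have hTa := hT (Real.exp s) (hexp s hs)
    have hTb := hT (Real.exp (s + δ)) (hexp _ (by linarith))
    rw [abs_le] at hTa hTb
    have hes : (0:ℝ) < Real.exp s := Real.exp_pos s
    have hesne : Real.exp s ≠ 0 := hes.ne'
    have hE1 : (1:ℝ) ≤ Real.exp δ := by
      rw [show (1:ℝ) = Real.exp 0 by simp]; exact Real.exp_le_exp.2 hδ0.le
    have hEe : Real.exp δ ≤ e := by rw [he_def]; exact Real.exp_le_exp.2 hδ1
    have hexpmul : Real.exp (-δ) * Real.exp δ = 1 := by rw [← Real.exp_add]; simp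
    have hEδ : Real.exp δ - 1 ≤ δ * Real.exp δ := by
      have h1 : 1 - δ ≤ Real.exp (-δ) := by have := Real.add_one_le_exp (-δ); linarith
      have k1 : (1-δ)*Real.exp δ ≤ 1 := by
        have := mul_le_mul_of_nonneg_right h1 (Real.exp_pos δ).le
        rwa [hexpmul] at this
      nlinarith
    have hEd : Real.exp δ - 1 ≤ δ + e*δ^2 := by
      have p1 : δ*(Real.exp δ - 1) ≤ δ*(δ*Real.exp δ) := mul_le_mul_of_nonneg_left hEδ hδ0.le
      have p2 : δ^2*Real.exp δ ≤ δ^2*e := mul_le_mul_of_nonneg_left hEe (sq_nonneg δ)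
      nlinarith
    have hE' : Real.exp (-δ) ≤ 1 - δ + δ^2 := by
      have h1 : 1 + δ ≤ Real.exp δ := by have := Real.add_one_le_exp δ; linarith
      nlinarith [Real.exp_pos (-δ)]
    have hE'0 : 0 ≤ Real.exp (-δ) := (Real.exp_pos _).le
    have hq3 : e*δ^2 ≤ ε*δ/2 := by nlinarith [mul_le_mul_of_nonneg_right h2eδ hδ0.le]
    constructor
    · -- upper bound
      have step1 : Sfn C (Real.exp (s+δ)) - Sfn C (Real.exp s)
          ≤ (l + εd) * Real.exp (s+δ) - (l - εd) * Real.exp s := by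
        have := hTa.1; have := hTb.2; linarith
      have step2 : Sfn (logSet C) (s + δ) - Sfn (logSet C) s
          ≤ Real.exp (-s) * ((l + εd) * Real.exp (s+δ) - (l - εd) * Real.exp s) := by
        refine le_trans hb.2 ?_
        exact mul_le_mul_of_nonneg_left step1 (Real.exp_pos _).le
      have step3 : Real.exp (-s) * ((l + εd) * Real.exp (s+δ) - (l - εd) * Real.exp s)
          = (l + εd) * Real.exp δ - (l - εd) := by
        rw [Real.exp_neg, Real.exp_add]
        field_simp
      rw [step3] at step2
      refine le_trans step2 ?_
      have q1 : l*(Real.exp δ - 1) ≤ l*(δ + e*δ^2) := mul_le_mul_of_nonneg_left hEd hl0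
      have q2 : l*(e*δ^2) ≤ 1*(e*δ^2) :=
        mul_le_mul_of_nonneg_right hl1 (mul_nonneg he0 (sq_nonneg δ))
      have q4 : εd*(Real.exp δ + 1) ≤ εd*(2*e) := mul_le_mul_of_nonneg_left (by linarith) hεd.le
      have q5 : εd*(2*e) = ε*δ/2 := by linarith
      nlinarith [q1, q2, q4, q5, hq3]
    · -- lower bound
      have step1 : (l - εd) * Real.exp (s+δ) - (l + εd) * Real.exp s
          ≤ Sfn C (Real.exp (s+δ)) - Sfn C (Real.exp s) := by
        have := hTa.2; have := hTb.1; linarith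
      have step2 : Real.exp (-(s+δ)) * ((l - εd) * Real.exp (s+δ) - (l + εd) * Real.exp s)
          ≤ Sfn (logSet C) (s + δ) - Sfn (logSet C) s := by
        refine le_trans ?_ hb.1
        exact mul_le_mul_of_nonneg_left step1 (Real.exp_pos _).le
      have step3 : Real.exp (-(s+δ)) * ((l - εd) * Real.exp (s+δ) - (l + εd) * Real.exp s)
          = (l - εd) - (l + εd) * Real.exp (-δ) := by
        have hne : Real.exp δ ≠ 0 := (Real.exp_pos δ).ne'
        rw [show Real.exp (-(s+δ)) = (Real.exp s * Real.exp δ)⁻¹ by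
          rw [Real.exp_neg, Real.exp_add], Real.exp_add, Real.exp_neg]
        field_simp
      rw [step3] at step2
      refine le_trans ?_ step2
      have r1 : l*(δ - δ^2) ≤ l*(1 - Real.exp (-δ)) :=
        mul_le_mul_of_nonneg_left (by linarith) hl0
      have r2 : l*(δ^2) ≤ 1*(δ^2) := mul_le_mul_of_nonneg_right hl1 (sq_nonneg δ)
      have r3 : εd*(1 + Real.exp (-δ)) ≤ εd*2 := mul_le_mul_of_nonneg_left (by nlinarith) hεd.le
      have r4 : δ^2 ≤ e*δ^2 := le_mul_of_one_le_left (sq_nonneg δ) he.le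
      have r5 : 2*εd ≤ 2*e*εd := by
        have := mul_le_mul_of_nonneg_right (by linarith : (2:ℝ) ≤ 2*e) hεd.le
        linarith
      nlinarith [r1, r2, r3, r4, r5, hq3, h4eεd]
  -- iterate pieces
  have iter : ∀ x : ℝ, s₀ ≤ x → ∀ N : ℕ,
      Sfn (logSet C) (x + N*δ) - Sfn (logSet C) x ≤ N * ((l + ε) * δ) ∧
      N * ((l - ε) * δ) ≤ Sfn (logSet C) (x + N*δ) - Sfn (logSet C) x := by
    intro x hx N
    induction N with
    | zero => norm_num
    | succ N ih =>
      have hstep := piece (x + N*δ) (by have : (0:ℝ) ≤ (N:ℝ)*δ := mul_nonneg (Nat.cast_nonneg N) hδ0.le; linarith)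
      have harg : x + ((N:ℝ)+1)*δ = (x + N*δ) + δ := by ring
      push_cast
      rw [harg]
      constructor
      · have := ih.1; have := hstep.1; linarith
      · have := ih.2; have := hstep.2; linarith
  refine ⟨s₀ + 2, by linarith, fun x y hx hxy => ?_⟩
  have hψmono := Sfn_mono (logSet C)
  by_cases hcase : y ≤ s₀
  · have h1 : Sfn (logSet C) y - Sfn (logSet C) x ≤ y - x := Sfn_diff_le _ hL hx hxy
    have h2 : 0 ≤ Sfn (logSet C) y - Sfn (logSet C) x := sub_nonneg.2 (hψmono hxy)
    constructor
    · nlinarith [mul_nonneg (by linarith : (0:ℝ) ≤ l + ε) (by linarith : (0:ℝ) ≤ y - x)]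
    · nlinarith [(by linarith : l - ε ≤ 1), (by linarith : (0:ℝ) ≤ y - x)]
  · push_neg at hcase
    obtain ⟨x', hx'1, hx'2, hx'y, hx'0, hx's⟩ :
        ∃ x' : ℝ, x ≤ x' ∧ s₀ ≤ x' ∧ x' ≤ y ∧ 0 ≤ x' ∧ x' - x ≤ s₀ := by
      refine ⟨max x s₀, le_max_left _ _, le_max_right _ _, max_le hxy hcase.le,
        hx.trans (le_max_left _ _), ?_⟩
      have : max x s₀ ≤ x + s₀ := max_le (by linarith) (by linarith)
      linarith
    have hseg : Sfn (logSet C) x' - Sfn (logSet C) x ≤ x' - x := Sfn_diff_le _ hL hx hx'1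
    have hseg0 : 0 ≤ Sfn (logSet C) x' - Sfn (logSet C) x := sub_nonneg.2 (hψmono hx'1)
    constructor
    · -- upper
      obtain ⟨N, hN1, hN2⟩ : ∃ N : ℕ, y - x' ≤ N*δ ∧ (N:ℝ)*δ ≤ (y - x') + δ := by
        refine ⟨Nat.ceil ((y - x')/δ), ?_, ?_⟩
        · have := Nat.le_ceil ((y - x')/δ)
          calc y - x' = ((y-x')/δ)*δ := by field_simp
            _ ≤ (Nat.ceil ((y - x')/δ) : ℝ)*δ := mul_le_mul_of_nonneg_right this hδ0.le
        · have h := Nat.ceil_lt_add_one (div_nonneg (by linarith) hδ0.le : (0:ℝ) ≤ (y - x')/δ)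
          have := mul_le_mul_of_nonneg_right h.le hδ0.le
          rw [add_mul, div_mul_cancel₀ _ hδ0.ne'] at this
          linarith
      have hup := (iter x' hx'2 N).1
      have hmono2 : Sfn (logSet C) y ≤ Sfn (logSet C) (x' + N*δ) := hψmono (by linarith)
      have hlε : (0:ℝ) ≤ l + ε := by linarith
      have hcalc : (N:ℝ) * ((l+ε)*δ) ≤ (l+ε)*((y - x') + δ) := by
        rw [show (N:ℝ) * ((l+ε)*δ) = (l+ε)*((N:ℝ)*δ) by ring]
        exact mul_le_mul_of_nonneg_left hN2 hlε
      have h1 : (l+ε)*(y-x') ≤ (l+ε)*(y-x) := mul_le_mul_of_nonneg_left (by linarith) hlε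
      have h2 : (l+ε)*δ ≤ 2 := by nlinarith
      nlinarith
    · -- lower
      rcases le_or_gt 0 (l - ε) with hlε | hlε
      · obtain ⟨N, hN1, hN2⟩ : ∃ N : ℕ, (N:ℝ)*δ ≤ y - x' ∧ y - x' - δ ≤ (N:ℝ)*δ := by
          refine ⟨Nat.floor ((y - x')/δ), ?_, ?_⟩
          · have := Nat.floor_le (div_nonneg (by linarith) hδ0.le : (0:ℝ) ≤ (y - x')/δ)
            calc (Nat.floor ((y - x')/δ) : ℝ)*δ ≤ ((y-x')/δ)*δ :=
                  mul_le_mul_of_nonneg_right this hδ0.le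
              _ = y - x' := by field_simp
          · have h := Nat.lt_floor_add_one ((y - x')/δ)
            have := mul_le_mul_of_nonneg_right h.le hδ0.le
            rw [add_mul, div_mul_cancel₀ _ hδ0.ne'] at this
            linarith
        have hlo := (iter x' hx'2 N).2
        have hmono2 : Sfn (logSet C) (x' + N*δ) ≤ Sfn (logSet C) y := hψmono (by linarith)
        have hcalc : (l-ε)*(y - x' - δ) ≤ (N:ℝ) * ((l-ε)*δ) := by
          rw [show (N:ℝ) * ((l-ε)*δ) = (l-ε)*((N:ℝ)*δ) by ring]
          exact mul_le_mul_of_nonneg_left hN2 hlε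
        have h1 : (l-ε)*(x'-x) ≤ x'-x := by nlinarith
        have h2 : (l-ε)*δ ≤ 2 := by nlinarith
        have h3 : (l-ε)*(y-x) = (l-ε)*(y-x'-δ) + (l-ε)*(x'-x) + (l-ε)*δ := by ring
        nlinarith
      · have h0 : (l-ε)*(y-x) ≤ 0 := mul_nonpos_of_nonpos_of_nonneg hlε.le (by linarith)
        have h2 : 0 ≤ Sfn (logSet C) y - Sfn (logSet C) x := sub_nonneg.2 (hψmono hxy)
        nlinarith

lemma logSet_H {C : Set ℝ} (hC : MeasurableSet C) (hL : MeasurableSet (logSet C)) {l : ℝ}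
    (hl : Tendsto (rho C) atTop (𝓝 l)) :
    ∀ ε : ℝ, 0 < ε → ∃ M : ℝ, 0 ≤ M ∧ ∀ x y : ℝ, 0 ≤ x → x ≤ y →
      Sfn (logSet C) y - Sfn (logSet C) x ≤ (l + ε) * (y - x) + M ∧
      (l - ε) * (y - x) - M ≤ Sfn (logSet C) y - Sfn (logSet C) x := by
  intro ε hε
  obtain ⟨M, hM0, hM⟩ := logSet_H_aux hC hL hl (lt_min hε one_pos) (min_le_right ε 1)
  refine ⟨M, hM0, fun x y hx hxy => ?_⟩
  obtain ⟨h1, h2⟩ := hM x y hx hxy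
  have hmin : min ε 1 ≤ ε := min_le_left _ _
  constructor
  · refine le_trans h1 ?_
    have : (l + min ε 1) * (y-x) ≤ (l + ε) * (y-x) :=
      mul_le_mul_of_nonneg_right (by linarith) (by linarith)
    linarith
  · refine le_trans ?_ h2
    have : (l - ε) * (y-x) ≤ (l - min ε 1) * (y-x) :=
      mul_le_mul_of_nonneg_right (by linarith) (by linarith)
    linarith

-- ===================== final glue =====================

lemma tendsto_Lfn_Ufn {E : Set ℝ} (hE : MeasurableSet E) {l : ℝ}
    (H : ∀ ε : ℝ, 0 < ε → ∃ M : ℝ, 0 ≤ M ∧ ∀ x y : ℝ, 0 ≤ x → x ≤ y →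
        Sfn E y - Sfn E x ≤ (l + ε) * (y - x) + M ∧
        (l - ε) * (y - x) - M ≤ Sfn E y - Sfn E x) :
    Lfn E = Ufn E := by
  obtain ⟨hsup, hinf⟩ := sup_inf_tendsto hE H
  rw [Lfn, Ufn, hinf.liminf_eq, hsup.limsup_eq]

lemma Ccal_subset_Auni : Ccal ⊆ Auni := by
  rintro C ⟨hCM, l, hl⟩
  have hC : MeasurableSet C := Mcal_measurable hCM
  have hLM : logSet C ∈ Mcal := logSet_mem_Mcal hCM
  have hL : MeasurableSet (logSet C) := Mcal_measurable hLM
  exact ⟨hCM, hLM, tendsto_Lfn_Ufn hL (logSet_H hC hL hl)⟩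

/-- The set `A = ⋃ₙ [e^{2n}, e^{2n+1})` belongs to `𝓐^uni` with `α(A) = 1/2`
(indeed `ρ_{log A}(x) → 1/2`), but `ρ_A` does not converge, so `A ∉ 𝓒`.
Hence `𝓒` is a proper subset of `𝓐^uni`. -/
theorem stmt19 :
    (⋃ n : ℕ, Set.Ico (Real.exp (2 * n)) (Real.exp (2 * n + 1))) ∈ Auni ∧
    Tendsto (rho (logSet (⋃ n : ℕ, Set.Ico (Real.exp (2 * n)) (Real.exp (2 * n + 1)))))
      atTop (𝓝 (1/2)) ∧
    alphaFn (⋃ n : ℕ, Set.Ico (Real.exp (2 * n)) (Real.exp (2 * n + 1))) = 1/2 ∧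
    ¬ (∃ l : ℝ, Tendsto (rho (⋃ n : ℕ, Set.Ico (Real.exp (2 * n)) (Real.exp (2 * n + 1))))
        atTop (𝓝 l)) ∧
    (⋃ n : ℕ, Set.Ico (Real.exp (2 * n)) (Real.exp (2 * n + 1))) ∉ Ccal ∧
    Ccal ⊂ Auni := by
  have hAeq : (⋃ n : ℕ, Set.Ico (Real.exp (2 * n)) (Real.exp (2 * n + 1))) = Aset := rfl
  obtain ⟨hBsup, hBinf⟩ := sup_inf_tendsto (Mcal_measurable Bset_mem_Mcal) Bset_H
  have hBW : Bset ∈ Wuni := ⟨Bset_mem_Mcal, by rw [Lfn, Ufn, hBinf.liminf_eq, hBsup.limsup_eq]⟩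
  have hAuni : Aset ∈ Auni := ⟨Aset_mem_Mcal, by rw [logSet_Aset]; exact hBW⟩
  have hrho : Tendsto (rho (logSet Aset)) atTop (𝓝 (1/2)) := by
    rw [logSet_Aset]; exact rho_B_tendsto
  have hnotC : Aset ∉ Ccal := fun h => rho_A_not_conv h.2
  rw [hAeq]
  refine ⟨hAuni, hrho, ?_, rho_A_not_conv, hnotC, ?_⟩
  · rw [alphaFn, lam, hrho.limUnder_eq]
  · rw [ssubset_iff_subset_ne]
    refine ⟨Ccal_subset_Auni, fun h => hnotC ?_⟩
    rw [h]
    exact hAuni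

end UPN
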